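/- Let A, B be positive reals and c₁, c₂ real numbers. For any two positive reals N₁, N₂, the unique minimizer over x ∈ (0, ∞) of x ↦ N₁^{-1/4}·(A·x^{1/4} + B·x^{-1/4}) + c₁ coincides with the unique minimizer over x ∈ (0, ∞) of x ↦ N₂^{-1/4}·(A·x^{1/4} + B·x^{-1/4}) + c₂; both equal B²/A². That is, the optimal class-to-sample ratio is invariant to the size of the pre-training dataset. -/
import Mathlib

open Real

lemma t4_eq (x : ℝ) (hx : 0 < x) : (x ^ ((1:ℝ)/4)) ^ (4:ℕ) = x := by
  rw [← Real.rpow_natCast (x ^ ((1:ℝ)/4)) 4, ← Real.rpow_mul hx.le]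
  norm_num

lemma quart_pow (A B : ℝ) (hA : 0 < A) (hB : 0 < B) :
    (Real.sqrt B / Real.sqrt A) ^ (4:ℕ) = B^2/A^2 := by
  have h1 : Real.sqrt A ^ 2 = A := Real.sq_sqrt hA.le
  have h2 : Real.sqrt B ^ 2 = B := Real.sq_sqrt hB.le
  rw [div_pow, show (4:ℕ) = 2*2 from rfl, pow_mul, pow_mul, h1, h2]

lemma min_pt_pow (A B : ℝ) (hA : 0 < A) (hB : 0 < B) :
    ((B^2/A^2 : ℝ)) ^ ((1:ℝ)/4) = Real.sqrt B / Real.sqrt A := by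
  rw [← quart_pow A B hA hB, ← Real.rpow_natCast (Real.sqrt B / Real.sqrt A) 4,
    ← Real.rpow_mul (by positivity)]
  norm_num

lemma g_lower (A B x : ℝ) (hA : 0 < A) (hB : 0 < B) (hx : 0 < x) :
    2 * (Real.sqrt A * Real.sqrt B) ≤ A * x ^ ((1:ℝ)/4) + B * x ^ (-(1:ℝ)/4) := by
  have ht : 0 < x ^ ((1:ℝ)/4) := Real.rpow_pos_of_pos hx _
  have hinv : x ^ (-(1:ℝ)/4) = (x ^ ((1:ℝ)/4))⁻¹ := by
    rw [neg_div, Real.rpow_neg hx.le]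
  rw [hinv]
  set t := x ^ ((1:ℝ)/4)
  have h1 : Real.sqrt A ^ 2 = A := Real.sq_sqrt hA.le
  have h2 : Real.sqrt B ^ 2 = B := Real.sq_sqrt hB.le
  have h4 : t * t⁻¹ = 1 := mul_inv_cancel₀ ht.ne'
  have hi : 0 < t⁻¹ := inv_pos.mpr ht
  nlinarith [sq_nonneg (Real.sqrt A * t - Real.sqrt B), mul_pos ht hi,
    Real.sqrt_nonneg A, Real.sqrt_nonneg B, mul_pos (mul_pos ht ht) hi]

lemma g_eq_case (A B x : ℝ) (hA : 0 < A) (hB : 0 < B) (hx : 0 < x)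
    (h : A * x ^ ((1:ℝ)/4) + B * x ^ (-(1:ℝ)/4) = 2 * (Real.sqrt A * Real.sqrt B)) :
    x = B^2/A^2 := by
  have ht : 0 < x ^ ((1:ℝ)/4) := Real.rpow_pos_of_pos hx _
  have hinv : x ^ (-(1:ℝ)/4) = (x ^ ((1:ℝ)/4))⁻¹ := by
    rw [neg_div, Real.rpow_neg hx.le]
  rw [hinv] at h
  set t := x ^ ((1:ℝ)/4) with htd
  have h1 : Real.sqrt A ^ 2 = A := Real.sq_sqrt hA.le
  have h2 : Real.sqrt B ^ 2 = B := Real.sq_sqrt hB.le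
  have h5 : A * t^2 + B = 2*(Real.sqrt A * Real.sqrt B)*t := by
    have hh : (A*t + B*t⁻¹)*t = (2*(Real.sqrt A * Real.sqrt B))*t := by rw [h]
    field_simp at hh
    linarith [hh]
  have hsq : (Real.sqrt A * t - Real.sqrt B)^2 = 0 := by nlinarith [h5]
  have heq : Real.sqrt A * t = Real.sqrt B := by
    have := pow_eq_zero_iff (n := 2) (by norm_num) |>.mp hsq
    linarith [this]
  have hsA : 0 < Real.sqrt A := Real.sqrt_pos.mpr hA
  have htv : t = Real.sqrt B / Real.sqrt A := by
    field_simp; linarith [heq]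
  calc x = t ^ (4:ℕ) := (t4_eq x hx).symm
  _ = B^2/A^2 := by rw [htv, quart_pow A B hA hB]

lemma g_val (A B : ℝ) (hA : 0 < A) (hB : 0 < B) :
    A * ((B^2/A^2 : ℝ)) ^ ((1:ℝ)/4) + B * ((B^2/A^2 : ℝ)) ^ (-(1:ℝ)/4)
      = 2 * (Real.sqrt A * Real.sqrt B) := by
  have hx0 : (0:ℝ) < B^2/A^2 := by positivity
  have hinv : ((B^2/A^2 : ℝ)) ^ (-(1:ℝ)/4) = (((B^2/A^2 : ℝ)) ^ ((1:ℝ)/4))⁻¹ := by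
    rw [neg_div, Real.rpow_neg hx0.le]
  rw [hinv, min_pt_pow A B hA hB, inv_div]
  have h1 : Real.sqrt A ^ 2 = A := Real.sq_sqrt hA.le
  have h2 : Real.sqrt B ^ 2 = B := Real.sq_sqrt hB.le
  have hsA : 0 < Real.sqrt A := Real.sqrt_pos.mpr hA
  have hsB : 0 < Real.sqrt B := Real.sqrt_pos.mpr hB
  field_simp
  nlinarith [hsA, hsB]

lemma core_set (A B : ℝ) (hA : 0 < A) (hB : 0 < B) :
    {x ∈ Set.Ioi (0:ℝ) | ∀ y ∈ Set.Ioi (0:ℝ),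
        A * x ^ ((1:ℝ)/4) + B * x ^ (-(1:ℝ)/4)
          ≤ A * y ^ ((1:ℝ)/4) + B * y ^ (-(1:ℝ)/4)} = {B^2/A^2} := by
  have hx0 : (0:ℝ) < B^2/A^2 := by positivity
  ext x
  simp only [Set.mem_setOf_eq, Set.mem_Ioi, Set.mem_singleton_iff]
  constructor
  · rintro ⟨hx, hmin⟩
    apply g_eq_case A B x hA hB hx
    exact le_antisymm (le_trans (hmin _ hx0) (le_of_eq (g_val A B hA hB)))
      (g_lower A B x hA hB hx)
  · rintro rfl
    exact ⟨hx0, fun y hy => (g_val A B hA hB) ▸ g_lower A B y hA hB hy⟩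

lemma weighted_set (A B c N : ℝ) (hA : 0 < A) (hB : 0 < B) (hN : 0 < N) :
    {x ∈ Set.Ioi (0 : ℝ) | ∀ y ∈ Set.Ioi (0 : ℝ),
        N ^ (-(1 : ℝ) / 4) * (A * x ^ ((1 : ℝ) / 4) + B * x ^ (-(1 : ℝ) / 4)) + c
          ≤ N ^ (-(1 : ℝ) / 4) * (A * y ^ ((1 : ℝ) / 4) + B * y ^ (-(1 : ℝ) / 4)) + c}
      = {B ^ 2 / A ^ 2} := by
  rw [← core_set A B hA hB]
  have hNp : 0 < N ^ (-(1 : ℝ) / 4) := Real.rpow_pos_of_pos hN _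
  ext x
  simp only [Set.mem_setOf_eq, Set.mem_Ioi]
  constructor
  · rintro ⟨hx, hmin⟩
    exact ⟨hx, fun y hy => le_of_mul_le_mul_left (by linarith [hmin y hy]) hNp⟩
  · rintro ⟨hx, hmin⟩
    exact ⟨hx, fun y hy => by
      have := mul_le_mul_of_nonneg_left (hmin y hy) hNp.le
      linarith⟩

/-- The optimal class-to-sample ratio is invariant to the size of the pre-training
dataset: for any `N₁, N₂ > 0`, the set of minimizers over `(0, ∞)` of
`x ↦ Nᵢ^{-1/4}·(A·x^{1/4} + B·x^{-1/4}) + cᵢ` is the same, and equals `{B²/A²}`. -/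
theorem optimal_ratio_invariant_to_dataset_size
    (A B : ℝ) (hA : 0 < A) (hB : 0 < B)
    (c₁ c₂ N₁ N₂ : ℝ) (hN₁ : 0 < N₁) (hN₂ : 0 < N₂) :
    {x ∈ Set.Ioi (0 : ℝ) | ∀ y ∈ Set.Ioi (0 : ℝ),
        N₁ ^ (-(1 : ℝ) / 4) * (A * x ^ ((1 : ℝ) / 4) + B * x ^ (-(1 : ℝ) / 4)) + c₁
          ≤ N₁ ^ (-(1 : ℝ) / 4) * (A * y ^ ((1 : ℝ) / 4) + B * y ^ (-(1 : ℝ) / 4)) + c₁}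
      = {x ∈ Set.Ioi (0 : ℝ) | ∀ y ∈ Set.Ioi (0 : ℝ),
          N₂ ^ (-(1 : ℝ) / 4) * (A * x ^ ((1 : ℝ) / 4) + B * x ^ (-(1 : ℝ) / 4)) + c₂
            ≤ N₂ ^ (-(1 : ℝ) / 4) * (A * y ^ ((1 : ℝ) / 4) + B * y ^ (-(1 : ℝ) / 4)) + c₂} ∧
    {x ∈ Set.Ioi (0 : ℝ) | ∀ y ∈ Set.Ioi (0 : ℝ),
        N₁ ^ (-(1 : ℝ) / 4) * (A * x ^ ((1 : ℝ) / 4) + B * x ^ (-(1 : ℝ) / 4)) + c₁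
          ≤ N₁ ^ (-(1 : ℝ) / 4) * (A * y ^ ((1 : ℝ) / 4) + B * y ^ (-(1 : ℝ) / 4)) + c₁}
      = {B ^ 2 / A ^ 2} := by
  rw [weighted_set A B c₁ N₁ hA hB hN₁, weighted_set A B c₂ N₂ hA hB hN₂]
  exact ⟨rfl, rfl⟩
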